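/- Let X be a complex Banach space and x* ∈ X* with ‖x*‖ = 1. Then the following are equivalent: (i) the only functional φ ∈ X*** with ‖φ‖ ≤ 1 and φ(i_X(x)) = x*(x) for all x ∈ X is φ = i_{X*}(x*) (i.e., x* has a unique norm-preserving extension to a functional on X**); (ii) the identity map on the closed unit ball of X*, viewed as a map from the relative weak-star topology to the relative weak topology, is continuous at the point x*. -/

import Mathlib

open NormedSpace

noncomputable section

set_option maxHeartbeats 1000000

/-- The transpose (dual map) of a continuous linear map between (semi)normed spaces:
`ctranspose f` sends a functional `g` to `g ∘ f`. -/
def ctranspose {E F : Type*} [SeminormedAddCommGroup E] [NormedSpace ℂ E]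
    [SeminormedAddCommGroup F] [NormedSpace ℂ F] (f : E →L[ℂ] F) :
    StrongDual ℂ F →L[ℂ] StrongDual ℂ E :=
  (ContinuousLinearMap.compL ℂ E F ℂ).flip f

/-- A bounded linear projection `P` is an L-projection if `‖z‖ = ‖P z‖ + ‖z - P z‖`
for all `z`. -/
def IsLProjection {Z : Type*} [SeminormedAddCommGroup Z] [NormedSpace ℂ Z]
    (P : Z →L[ℂ] Z) : Prop :=
  (∀ z, P (P z) = P z) ∧ ∀ z, ‖z‖ = ‖P z‖ + ‖z - P z‖

open Filter Topology Metric in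
/-- Finite-dimensional Goldstine/Helly lemma. -/
theorem goldstine_finset {E : Type*} [NormedAddCommGroup E] [NormedSpace ℂ E]
    (φ : StrongDual ℂ (StrongDual ℂ E)) (hφ : ‖φ‖ ≤ 1) (s : Finset (StrongDual ℂ E)) {ε : ℝ} (hε : 0 < ε) :
    ∃ y : E, ‖y‖ ≤ 1 ∧ ∀ G ∈ s, ‖G y - φ G‖ < ε := by
  classical
  set T : E → (↥s → ℂ) := fun y j => (j : StrongDual ℂ E) y with hT
  set K : Set (↥s → ℂ) := closure (T '' Metric.closedBall 0 1) with hK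
  have hKconv : Convex ℝ K := by
    refine Convex.closure ?_
    refine Convex.is_linear_image (convex_closedBall (0 : E) 1) ?_
    constructor
    · intro a b; funext j; simp [hT]
    · intro c a; funext j; simp [hT]
  set c : ↥s → ℂ := fun j => φ (j : StrongDual ℂ E) with hc
  have hcK : c ∈ K := by
    by_contra hcK
    obtain ⟨f, u, hfu, huf⟩ :=
      RCLike.geometric_hahn_banach_closed_point (𝕜 := ℂ) hKconv isClosed_closure hcK
    set G₀ : StrongDual ℂ E := ∑ j : ↥s, f (Pi.single j 1) • (j : StrongDual ℂ E) with hG₀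
    have key : ∀ v : ↥s → ℂ, f v = ∑ j : ↥s, f (Pi.single j 1) * v j := by
      intro v
      have hv : v = ∑ j : ↥s, v j • (Pi.single j (1 : ℂ) : ↥s → ℂ) := by
        funext i
        rw [Finset.sum_apply]
        simp [Pi.single_apply]
      conv_lhs => rw [hv]
      rw [map_sum]
      refine Finset.sum_congr rfl fun j _ => ?_
      rw [map_smul]
      simp [mul_comm]
    have hTy : ∀ y : E, f (T y) = G₀ y := by
      intro y
      rw [key, hG₀]
      simp [ContinuousLinearMap.sum_apply, hT, smul_eq_mul]
    have hfc : f c = φ G₀ := by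
      rw [key, hG₀, map_sum]
      refine Finset.sum_congr rfl fun j _ => ?_
      rw [map_smul]
      simp [hc, smul_eq_mul]
    have hball : ∀ y : E, ‖y‖ ≤ 1 → RCLike.re (G₀ y) < u := by
      intro y hy
      have : T y ∈ K := subset_closure ⟨y, by simpa [mem_closedBall_zero_iff] using hy, rfl⟩
      have := hfu _ this
      rwa [hTy] at this
    have hupos : 0 < u := by simpa using hball 0 (by simp)
    have hnorm1 : ∀ y : E, ‖y‖ ≤ 1 → ‖G₀ y‖ ≤ u := by
      intro y hy
      rcases eq_or_ne (G₀ y) 0 with h0 | h0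
      · rw [h0]; simpa using hupos.le
      · have ha : ‖((‖G₀ y‖ : ℂ) / G₀ y)‖ = 1 := by
          rw [norm_div]
          simp [h0, norm_ne_zero_iff.mpr h0]
        have hmem : ‖((‖G₀ y‖ : ℂ) / G₀ y) • y‖ ≤ 1 := by
          rw [norm_smul, ha, one_mul]; exact hy
        have := hball _ hmem
        rw [map_smul, smul_eq_mul, div_mul_cancel₀ _ h0] at this
        simpa using this.le
    have hG₀norm : ‖G₀‖ ≤ u := by
      refine ContinuousLinearMap.opNorm_le_bound _ hupos.le fun y => ?_
      rcases eq_or_ne y 0 with rfl | hy0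
      · simp
      · have hy : ‖((‖y‖⁻¹ : ℂ) • y : E)‖ ≤ 1 := by
          rw [norm_smul]
          simp [norm_ne_zero_iff.mpr hy0]
        have := hnorm1 _ hy
        rw [map_smul, smul_eq_mul, norm_mul] at this
        simp only [Complex.norm_real, norm_inv, norm_norm, Real.norm_eq_abs,
          abs_of_nonneg (norm_nonneg y)] at this
        rw [inv_mul_le_iff₀ (norm_pos_iff.mpr hy0)] at this
        linarith [this]
    have : RCLike.re (f c) ≤ u := by
      rw [hfc]
      calc RCLike.re (φ G₀) ≤ ‖φ G₀‖ := RCLike.re_le_norm _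
        _ ≤ ‖φ‖ * ‖G₀‖ := φ.le_opNorm _
        _ ≤ 1 * u := by
            refine mul_le_mul hφ hG₀norm (norm_nonneg _) zero_le_one
        _ = u := one_mul u
    exact absurd this (not_le.mpr huf)
  rw [hK, Metric.mem_closure_iff] at hcK
  obtain ⟨b, ⟨y, hymem, rfl⟩, hdist⟩ := hcK ε hε
  refine ⟨y, by simpa [mem_closedBall_zero_iff] using hymem, fun G hG => ?_⟩
  have := dist_le_pi_dist c (T y) ⟨G, hG⟩
  have h2 : dist (c ⟨G, hG⟩) (T y ⟨G, hG⟩) < ε := lt_of_le_of_lt this hdist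
  rw [dist_eq_norm] at h2
  simpa [hc, hT, norm_sub_rev] using h2

open Filter Topology Metric in
/-- Goldstine's theorem (closure form). -/
theorem goldstine_mem_closure {E : Type*} [NormedAddCommGroup E] [NormedSpace ℂ E]
    (φ : StrongDual ℂ (StrongDual ℂ E)) (hφ : ‖φ‖ ≤ 1) :
    StrongDual.toWeakDual φ ∈
      closure ((fun y : E => StrongDual.toWeakDual (inclusionInDoubleDual ℂ E y)) ''
        Metric.closedBall 0 1) := by
  classical
  rw [mem_closure_iff_nhds]
  intro U hU
  have hnhds : 𝓝 (StrongDual.toWeakDual φ) =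
      Filter.comap (fun (ψ : WeakDual ℂ (StrongDual ℂ E)) (G : StrongDual ℂ E) => ψ G)
        (𝓝 (fun G : StrongDual ℂ E => φ G)) := by
    exact nhds_induced _ _
  rw [hnhds, Filter.mem_comap] at hU
  obtain ⟨V, hV, hVU⟩ := hU
  rw [nhds_pi, Filter.mem_pi] at hV
  obtain ⟨I, hIfin, W, hW, hIW⟩ := hV
  choose δ hδpos hδball using fun G => Metric.mem_nhds_iff.mp (hW G)
  set F : Finset (StrongDual ℂ E) := hIfin.toFinset with hF
  obtain ⟨ε, hεpos, hεle⟩ : ∃ ε > 0, ∀ G ∈ F, ε ≤ δ G := by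
    rcases F.eq_empty_or_nonempty with hFe | hFn
    · exact ⟨1, one_pos, by simp [hFe]⟩
    · exact ⟨F.inf' hFn δ, (Finset.lt_inf'_iff hFn).mpr fun G _ => hδpos G,
        fun G hG => Finset.inf'_le δ hG⟩
  obtain ⟨y, hy1, hy2⟩ := goldstine_finset φ hφ F hεpos
  refine ⟨StrongDual.toWeakDual (inclusionInDoubleDual ℂ E y), ?_,
    ⟨y, by simpa [mem_closedBall_zero_iff] using hy1, rfl⟩⟩
  refine hVU ?_
  refine Set.mem_preimage.mpr (hIW ?_)
  intro G hG
  refine hδball G ?_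
  rw [Metric.mem_ball]
  have : ‖G y - φ G‖ < ε := hy2 G (hIfin.mem_toFinset.mpr hG)
  calc dist (inclusionInDoubleDual ℂ E y G) (φ G) = ‖G y - φ G‖ := by
        rw [dist_eq_norm]; rfl
    _ < ε := this
    _ ≤ δ G := hεle G (hIfin.mem_toFinset.mpr hG)

open Filter Topology Metric in
/-- For `x* ∈ X*` of norm one, `x*` has a unique norm-preserving extension to a
functional on `X**` if and only if the identity map on the closed unit ball of `X*`, from the
relative weak-star topology to the relative weak topology, is continuous at `x*`. -/
theorem unique_norm_preserving_extension_iff_weak_weakStar_continuousAt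
    (X : Type*) [NormedAddCommGroup X] [NormedSpace ℂ X] [CompleteSpace X]
    (xs : StrongDual ℂ X) (hxs : ‖xs‖ = 1) :
    (∀ φ : StrongDual ℂ (StrongDual ℂ (StrongDual ℂ X)),
        @Norm.norm _ (ContinuousLinearMap.hasOpNorm (E := StrongDual ℂ (StrongDual ℂ X))
          (σ₁₂ := RingHom.id ℂ)) φ ≤ 1 →
        (∀ x : X, φ (inclusionInDoubleDual ℂ X x) = xs x) →
        φ = inclusionInDoubleDual ℂ (StrongDual ℂ X) xs) ↔
      ContinuousWithinAt
        (fun φ : WeakDual ℂ X => toWeakSpace ℂ (StrongDual ℂ X) (WeakDual.toStrongDual φ))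
        {φ : WeakDual ℂ X | ‖WeakDual.toStrongDual φ‖ ≤ 1}
        (StrongDual.toWeakDual xs) := by
  set B : Set (WeakDual ℂ X) := {φ : WeakDual ℂ X | ‖WeakDual.toStrongDual φ‖ ≤ 1} with hB
  constructor
  · intro h
    letI : NormedAddCommGroup (StrongDual ℂ (StrongDual ℂ (StrongDual ℂ X))) :=
      ContinuousLinearMap.toNormedAddCommGroup (E := StrongDual ℂ (StrongDual ℂ X)) (F := ℂ) (σ₁₂ := RingHom.id ℂ)
    letI : NormedSpace ℂ (StrongDual ℂ (StrongDual ℂ (StrongDual ℂ X))) :=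
      ContinuousLinearMap.toNormedSpace (E := StrongDual ℂ (StrongDual ℂ X)) (F := ℂ) (σ₁₂ := RingHom.id ℂ)
    rw [ContinuousWithinAt]
    have hinj : Function.Injective ((topDualPairing ℂ (StrongDual ℂ X)).flip) := by
      intro a b hab
      rw [NormedSpace.eq_iff_forall_dual_eq ℂ]
      intro g
      exact LinearMap.congr_fun hab g
    refine (WeakBilin.tendsto_iff_forall_eval_tendsto (B := (topDualPairing ℂ (StrongDual ℂ X)).flip) hinj).mpr ?_
    intro F
    by_contra hF
    rw [Metric.tendsto_nhds] at hF
    push_neg at hF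
    obtain ⟨ε, hε, hfreq⟩ := hF
    have hfreq' : ∃ᶠ ψ in 𝓝[B] (StrongDual.toWeakDual xs),
        ε ≤ dist (F (WeakDual.toStrongDual ψ)) (F xs) := by
      exact hfreq
    have hne : NeBot ((𝓝[B] (StrongDual.toWeakDual xs)) ⊓
        𝓟 {ψ : WeakDual ℂ X | ε ≤ dist (F (WeakDual.toStrongDual ψ)) (F xs)}) :=
      Filter.frequently_iff_neBot.mp hfreq'
    set l := (𝓝[B] (StrongDual.toWeakDual xs)) ⊓
        𝓟 {ψ : WeakDual ℂ X | ε ≤ dist (F (WeakDual.toStrongDual ψ)) (F xs)} with hl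
    set g : WeakDual ℂ X → WeakDual ℂ (StrongDual ℂ (StrongDual ℂ X)) := fun ψ =>
      StrongDual.toWeakDual (inclusionInDoubleDual ℂ (StrongDual ℂ X) (WeakDual.toStrongDual ψ))
      with hg
    have hBsub : Set.MapsTo g B (WeakDual.toStrongDual ⁻¹' Metric.closedBall 0 1) := by
      intro ψ hψ
      simp only [Set.mem_preimage, mem_closedBall_zero_iff]
      calc ‖(inclusionInDoubleDual ℂ (StrongDual ℂ X)) (WeakDual.toStrongDual ψ)‖
          ≤ ‖inclusionInDoubleDual ℂ (StrongDual ℂ X)‖ * ‖WeakDual.toStrongDual ψ‖ :=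
            ContinuousLinearMap.le_opNorm _ _
        _ ≤ 1 * 1 := mul_le_mul (inclusionInDoubleDual_norm_le ℂ _) hψ (norm_nonneg _) zero_le_one
        _ = 1 := one_mul 1
    have hlB : l ≤ 𝓟 B :=
      le_trans inf_le_left (by rw [nhdsWithin]; exact inf_le_right)
    have hmaple : Filter.map g l ≤ 𝓟 (WeakDual.toStrongDual ⁻¹' Metric.closedBall 0 1) := by
      refine le_trans (Filter.map_mono hlB) ?_
      rw [Filter.map_principal]
      exact Filter.principal_mono.mpr hBsub.image_subset
    haveI : (Filter.map g l).NeBot := hne.map g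
    obtain ⟨χ, hχmem, hχcl⟩ :=
      (WeakDual.isCompact_closedBall (𝕜 := ℂ) (E := StrongDual ℂ (StrongDual ℂ X)) 0 1).exists_clusterPt hmaple
    have hφ1 : ‖WeakDual.toStrongDual χ‖ ≤ 1 := by
      simpa [mem_closedBall_zero_iff] using hχmem
    have hext : ∀ x : X, WeakDual.toStrongDual χ (inclusionInDoubleDual ℂ X x) = xs x := by
      intro x
      have hcl2 := hχcl.map (WeakDual.eval_continuous (inclusionInDoubleDual ℂ X x)).continuousAt Filter.tendsto_map
      rw [Filter.map_map] at hcl2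
      have hcomp : ((fun ψ : WeakDual ℂ (StrongDual ℂ (StrongDual ℂ X)) =>
          ψ (inclusionInDoubleDual ℂ X x)) ∘ g) = fun ψ : WeakDual ℂ X => ψ x := rfl
      rw [hcomp] at hcl2
      have htend : Tendsto (fun ψ : WeakDual ℂ X => ψ x) l (𝓝 (xs x)) := by
        have h0 : Tendsto (fun ψ : WeakDual ℂ X => ψ x) (𝓝 (StrongDual.toWeakDual xs)) (𝓝 (xs x)) :=
          (WeakDual.eval_continuous x).tendsto _
        exact h0.mono_left (le_trans inf_le_left nhdsWithin_le_nhds)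
      exact eq_of_nhds_neBot (hcl2.mono htend)
    have hFcl : ε ≤ dist (χ F) (F xs) := by
      have hcl3 := hχcl.map (WeakDual.eval_continuous F).continuousAt Filter.tendsto_map
      rw [Filter.map_map] at hcl3
      have hcomp : ((fun ψ : WeakDual ℂ (StrongDual ℂ (StrongDual ℂ X)) => ψ F) ∘ g) =
          fun ψ : WeakDual ℂ X => F (WeakDual.toStrongDual ψ) := rfl
      rw [hcomp] at hcl3
      have hsub : Filter.map (fun ψ : WeakDual ℂ X => F (WeakDual.toStrongDual ψ)) l ≤
          𝓟 {z : ℂ | ε ≤ dist z (F xs)} := by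
        refine le_trans (Filter.map_mono inf_le_right) ?_
        rw [Filter.map_principal]
        refine Filter.principal_mono.mpr ?_
        rintro z ⟨ψ, hψ, rfl⟩
        exact hψ
      have hclosed : IsClosed {z : ℂ | ε ≤ dist z (F xs)} :=
        isClosed_le continuous_const (continuous_id.dist continuous_const)
      have := mem_closure_iff_clusterPt.mpr (hcl3.mono hsub)
      rwa [hclosed.closure_eq] at this
    have heq := h (WeakDual.toStrongDual χ) hφ1 hext
    have hFeq : χ F = F xs := DFunLike.congr_fun heq F
    rw [hFeq, dist_self] at hFcl
    exact absurd hFcl (not_le.mpr hε)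
  · intro hc φ hφ hext
    have hmem := goldstine_mem_closure (E := StrongDual ℂ X) φ hφ
    set g : StrongDual ℂ X → WeakDual ℂ (StrongDual ℂ (StrongDual ℂ X)) := fun y =>
      StrongDual.toWeakDual (inclusionInDoubleDual ℂ (StrongDual ℂ X) y) with hg
    set l : Filter (StrongDual ℂ X) :=
      Filter.comap g (𝓝 (StrongDual.toWeakDual φ)) ⊓ 𝓟 (Metric.closedBall 0 1) with hl
    have hlne : NeBot l := by
      rw [hl, Filter.inf_principal_neBot_iff]
      intro U hU
      rw [Filter.mem_comap] at hU
      obtain ⟨V, hV, hVU⟩ := hU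
      obtain ⟨w, hwV, y, hyb, rfl⟩ := mem_closure_iff_nhds.mp hmem V hV
      exact ⟨y, hVU hwV, hyb⟩
    have hgl : Tendsto g l (𝓝 (StrongDual.toWeakDual φ)) :=
      tendsto_comap.mono_left inf_le_left
    have hevals : ∀ G : StrongDual ℂ (StrongDual ℂ X), Tendsto (fun y : StrongDual ℂ X => G y) l (𝓝 (φ G)) := by
      intro G
      exact ((WeakDual.eval_continuous G).tendsto (StrongDual.toWeakDual φ)).comp hgl
    have hlx : Tendsto (fun y : StrongDual ℂ X => StrongDual.toWeakDual y) l
        (𝓝 (StrongDual.toWeakDual xs)) := by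
      rw [tendsto_iff_forall_eval_tendsto_topDualPairing]
      intro x
      have h1 := hevals (inclusionInDoubleDual ℂ X x)
      rw [hext x] at h1
      exact h1
    have htoB : Tendsto (fun y : StrongDual ℂ X => StrongDual.toWeakDual y) l
        (𝓝[B] (StrongDual.toWeakDual xs)) := by
      refine tendsto_nhdsWithin_iff.mpr ⟨hlx, ?_⟩
      have hmem2 : Metric.closedBall (0 : StrongDual ℂ X) 1 ∈ l := le_principal_iff.mp inf_le_right
      filter_upwards [hmem2] with y hy
      simpa [hB, mem_closedBall_zero_iff] using hy
    have hcomp : Tendsto (fun y : StrongDual ℂ X => toWeakSpace ℂ (StrongDual ℂ X) y) l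
        (𝓝 (toWeakSpace ℂ (StrongDual ℂ X) xs)) := Filter.Tendsto.comp hc htoB
    refine ContinuousLinearMap.ext fun F => ?_
    have h1 := hevals F
    have h2 : Tendsto (fun y : StrongDual ℂ X => F y) l (𝓝 (F xs)) := by
      have hevF : Continuous fun z : WeakSpace ℂ (StrongDual ℂ X) =>
          (topDualPairing ℂ (StrongDual ℂ X)).flip z F := WeakBilin.eval_continuous _ F
      exact (hevF.tendsto _).comp hcomp
    exact tendsto_nhds_unique h1 h2
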